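/- Let N, m ∈ ℕ, K, M : ℝ → Matrix (Fin N) (Fin N) ℝ differentiable at 0 with M(t) symmetric for all t, E : ℝ → Matrix (Fin N) (Fin m) ℝ and Λ : ℝ → Matrix (Fin m) (Fin m) ℝ differentiable at 0, such that for all t in a neighborhood of 0: K(t) * E(t) = M(t) * E(t) * Λ(t) and (E(t))ᵀ * M(t) * E(t) = 1, and suppose Λ(0) = λ₀ • 1 for some λ₀ ∈ ℝ. Then, writing K₀ = K(0), M₀ = M(0), E₀ = E(0), and primes for derivatives at 0: (K₀ − λ₀ • M₀) * E' − M₀ * E₀ * Λ' = −(K' * E₀) + λ₀ • (M' * E₀), and (E₀)ᵀ * M₀ * E' + ((E₀)ᵀ * M₀ * E')ᵀ = −(E₀)ᵀ * M' * E₀. -/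

import Mathlib

open Matrix Filter

attribute [local instance] Matrix.normedAddCommGroup Matrix.normedSpace

lemma hasDerivAt_entry {a b : ℕ} {f : ℝ → Matrix (Fin a) (Fin b) ℝ}
    {f' : Matrix (Fin a) (Fin b) ℝ} {x : ℝ} (hf : HasDerivAt f f' x)
    (i : Fin a) (j : Fin b) : HasDerivAt (fun t => f t i j) (f' i j) x := by
  have h1 : HasDerivAt (fun t => f t i) (f' i) x := hasDerivAt_pi.mp hf i
  exact hasDerivAt_pi.mp h1 j

lemma hasDerivAt_of_entries {a b : ℕ} {f : ℝ → Matrix (Fin a) (Fin b) ℝ}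
    {f' : Matrix (Fin a) (Fin b) ℝ} {x : ℝ}
    (h : ∀ i j, HasDerivAt (fun t => f t i j) (f' i j) x) : HasDerivAt f f' x := by
  refine hasDerivAt_pi.mpr ?_
  intro i
  rw [hasDerivAt_pi]
  exact h i

lemma hasDerivAt_matmul {a b c : ℕ} {f : ℝ → Matrix (Fin a) (Fin b) ℝ}
    {g : ℝ → Matrix (Fin b) (Fin c) ℝ} {f' g'} {x : ℝ}
    (hf : HasDerivAt f f' x) (hg : HasDerivAt g g' x) :
    HasDerivAt (fun t => f t * g t) (f' * g x + f x * g') x := by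
  apply hasDerivAt_of_entries
  intro i j
  have : ∀ t, (f t * g t) i j = ∑ k, f t i k * g t k j := fun t => Matrix.mul_apply
  simp only [this]
  have : HasDerivAt (fun t => ∑ k, f t i k * g t k j)
      (∑ k, (f' i k * g x k j + f x i k * g' k j)) x :=
    HasDerivAt.fun_sum fun k _ => (hasDerivAt_entry hf i k).fun_mul (hasDerivAt_entry hg k j)
  convert this using 1
  simp [Matrix.mul_apply, Matrix.add_apply, Finset.sum_add_distrib]

lemma hasDerivAt_transpose {a b : ℕ} {f : ℝ → Matrix (Fin a) (Fin b) ℝ}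
    {f' : Matrix (Fin a) (Fin b) ℝ} {x : ℝ} (hf : HasDerivAt f f' x) :
    HasDerivAt (fun t => (f t)ᵀ) f'ᵀ x := by
  apply hasDerivAt_of_entries
  intro i j
  exact hasDerivAt_entry hf j i

/-- Block (degenerate) version of the discrete saddle-point system for the derivative of
an eigenspace trajectory `K(t) E(t) = M(t) E(t) Λ(t)`, `E(t)ᵀ M(t) E(t) = 1`, with
`Λ(0) = λ₀ • 1`: the main equation and the orthonormality constraint. -/
theorem discrete_eigenspace_derivative_saddle_point
    (N m : ℕ) (K M : ℝ → Matrix (Fin N) (Fin N) ℝ)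
    (K' M' : Matrix (Fin N) (Fin N) ℝ)
    (hK : HasDerivAt K K' 0) (hM : HasDerivAt M M' 0)
    (hMsymm : ∀ t, (M t)ᵀ = M t)
    (E : ℝ → Matrix (Fin N) (Fin m) ℝ) (Λ : ℝ → Matrix (Fin m) (Fin m) ℝ)
    (E' : Matrix (Fin N) (Fin m) ℝ) (Λ' : Matrix (Fin m) (Fin m) ℝ)
    (hE : HasDerivAt E E' 0) (hΛ : HasDerivAt Λ Λ' 0)
    (heig : ∀ᶠ t in nhds 0, K t * E t = M t * E t * Λ t)
    (hnorm : ∀ᶠ t in nhds 0, (E t)ᵀ * M t * E t = 1)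
    (lam0 : ℝ) (hΛ0 : Λ 0 = lam0 • (1 : Matrix (Fin m) (Fin m) ℝ)) :
    (K 0 - lam0 • M 0) * E' - M 0 * E 0 * Λ'
      = -(K' * E 0) + lam0 • (M' * E 0) ∧
    (E 0)ᵀ * M 0 * E' + ((E 0)ᵀ * M 0 * E')ᵀ = -((E 0)ᵀ * M' * E 0) := by
  have hKE : HasDerivAt (fun t => K t * E t) (K' * E 0 + K 0 * E') 0 :=
    hasDerivAt_matmul hK hE
  have hMEΛ : HasDerivAt (fun t => M t * E t * Λ t)
      ((M' * E 0 + M 0 * E') * Λ 0 + M 0 * E 0 * Λ') 0 :=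
    hasDerivAt_matmul (hasDerivAt_matmul hM hE) hΛ
  have h1 : K' * E 0 + K 0 * E' = (M' * E 0 + M 0 * E') * Λ 0 + M 0 * E 0 * Λ' :=
    (hKE.congr_of_eventuallyEq (Filter.EventuallyEq.symm heig)).unique hMEΛ
  have hTME : HasDerivAt (fun t => (E t)ᵀ * M t * E t)
      ((E'ᵀ * M 0 + (E 0)ᵀ * M') * E 0 + (E 0)ᵀ * M 0 * E') 0 :=
    hasDerivAt_matmul (hasDerivAt_matmul (hasDerivAt_transpose hE) hM) hE
  have h2 : (E'ᵀ * M 0 + (E 0)ᵀ * M') * E 0 + (E 0)ᵀ * M 0 * E' = 0 :=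
    (hTME.congr_of_eventuallyEq (Filter.EventuallyEq.symm hnorm)).unique (hasDerivAt_const _ _)
  constructor
  · rw [hΛ0] at h1
    simp only [Matrix.mul_smul, Matrix.mul_one, smul_add] at h1
    rw [Matrix.sub_mul, Matrix.smul_mul]
    have h1' : K 0 * E' = lam0 • (M' * E 0) + lam0 • (M 0 * E') + M 0 * E 0 * Λ' - K' * E 0 := by
      rw [eq_sub_iff_add_eq, add_comm]; exact h1
    rw [h1']; abel
  · have h2' : ((E 0)ᵀ * M 0 * E')ᵀ = E'ᵀ * M 0 * E 0 := by
      rw [Matrix.transpose_mul, Matrix.transpose_mul, Matrix.transpose_transpose,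
        hMsymm 0, Matrix.mul_assoc]
    rw [h2']
    rw [Matrix.add_mul] at h2
    rw [eq_neg_iff_add_eq_zero, ← h2]
    abel
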